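/- arXiv:1905.00656 — 6 statements merged into one kernel-verified Lean document; each statement's English description precedes it below -/
import Mathlib

section
/- Let X be a metric space, let ε ≥ 0, A ≥ 0 and B be real numbers, and let u, p, q, x, y be points of X. Suppose that dist(u,p) = dist(u,q) + dist(q,p), that dist(u,p) ≤ (1+ε)·dist(q,p) + 1, and that dist(q,x) ≤ A·dist(q,y) + B. Then dist(u,x) ≤ A·dist(u,y) + B + (A+1)·ε·dist(u,p) + (A+1). -/
theorem stmt_4 {X : Type*} [MetricSpace X] (ε A B : ℝ) (hε : 0 ≤ ε) (hA : 0 ≤ A)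
    (u p q x y : X)
    (h1 : dist u p = dist u q + dist q p)
    (h2 : dist u p ≤ (1 + ε) * dist q p + 1)
    (h3 : dist q x ≤ A * dist q y + B) :
    dist u x ≤ A * dist u y + B + (A + 1) * ε * dist u p + (A + 1) := by
  have t1 : dist u x ≤ dist u q + dist q x := dist_triangle u q x
  have t2 : dist q y ≤ dist q u + dist u y := dist_triangle q u y
  have e : dist q u = dist u q := dist_comm q u
  have hqp : dist q p ≤ dist u p := by
    have := dist_nonneg (x := u) (y := q); linarith
  nlinarith [dist_nonneg (x := u) (y := q), dist_nonneg (x := q) (y := p),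
    mul_le_mul_of_nonneg_left hqp hε]
end

section
/- Let X be a metric space, let ε ≥ 0 be a real number, and let u, p, q, w, f be points of X. Suppose that dist(u,p) = dist(u,q) + dist(q,p), that dist(u,p) ≤ (1+ε)·dist(q,p) + 1, and that dist(q,f) ≤ (1+ε)·dist(q,w) + 1. Then dist(u,f) ≤ (1+ε)·dist(u,w) + (2+ε)·ε·dist(u,p) + (3+ε). -/
theorem stmt_5 {X : Type*} [MetricSpace X] (ε : ℝ) (hε : 0 ≤ ε) (u p q w f : X)
    (h1 : dist u p = dist u q + dist q p)
    (h2 : dist u p ≤ (1 + ε) * dist q p + 1)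
    (h3 : dist q f ≤ (1 + ε) * dist q w + 1) :
    dist u f ≤ (1 + ε) * dist u w + (2 + ε) * ε * dist u p + (3 + ε) := by
  have t1 : dist u f ≤ dist u q + dist q f := dist_triangle u q f
  have t2 : dist q w ≤ dist q u + dist u w := dist_triangle q u w
  have e1 : dist q u = dist u q := dist_comm q u
  have n1 : 0 ≤ dist u q := dist_nonneg
  have n2 : 0 ≤ dist q p := dist_nonneg
  have key : dist u q ≤ ε * dist u p + 1 := by
    have hqp : dist q p ≤ dist u p := by linarith
    have : ε * dist q p ≤ ε * dist u p := mul_le_mul_of_nonneg_left hqp hε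
    linarith
  have h4 : (2 + ε) * dist u q ≤ (2 + ε) * (ε * dist u p + 1) :=
    mul_le_mul_of_nonneg_left key (by linarith)
  nlinarith
end

section
/- Let X be a metric space, let ε be a real number with 0 < ε < 1/4, and let u, p, q, w be points of X. Suppose that dist(u,p) = dist(u,q) + dist(q,p), that dist(u,p) ≤ (1+ε)·dist(q,p) + 1, and that dist(q,p) ≤ ε·dist(q,w). Then dist(u,p) ≤ 2ε·dist(u,w) + 2·(1+ε). -/
theorem stmt_6 {X : Type*} [MetricSpace X] (ε : ℝ) (hε0 : 0 < ε) (hε1 : ε < 1/4)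
    (u p q w : X)
    (h1 : dist u p = dist u q + dist q p)
    (h2 : dist u p ≤ (1 + ε) * dist q p + 1)
    (h3 : dist q p ≤ ε * dist q w) :
    dist u p ≤ 2 * ε * dist u w + 2 * (1 + ε) := by
  have ht : dist q w ≤ dist q u + dist u w := dist_triangle q u w
  have hc : dist q u = dist u q := dist_comm q u
  have h0 : 0 ≤ dist u w := dist_nonneg
  nlinarith [dist_nonneg (x := q) (y := p), dist_nonneg (x := u) (y := q)]
end

section
/- Let X be a metric space, let ε be a real number with 0 < ε < 1/4, and let u, p, q, w, f be points of X. Suppose that dist(u,p) = dist(u,q) + dist(q,p), that dist(u,p) ≤ (1+ε)·dist(q,p) + 1, that dist(q,p) ≤ ε·dist(q,w), and that dist(p,f) ≤ (1+ε)·dist(p,w) + 1. Then dist(u,f) ≤ (1+6ε)·dist(u,w) + 7. -/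
theorem stmt_7 {X : Type*} [MetricSpace X] (ε : ℝ) (hε0 : 0 < ε) (hε1 : ε < 1/4)
    (u p q w f : X)
    (h1 : dist u p = dist u q + dist q p)
    (h2 : dist u p ≤ (1 + ε) * dist q p + 1)
    (h3 : dist q p ≤ ε * dist q w)
    (h4 : dist p f ≤ (1 + ε) * dist p w + 1) :
    dist u f ≤ (1 + 6 * ε) * dist u w + 7 := by
  have t1 : dist u f ≤ dist u p + dist p f := dist_triangle u p f
  have t2 : dist p w ≤ dist p q + dist q w := dist_triangle p q w
  have t3 : dist q w ≤ dist q u + dist u w := dist_triangle q u w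
  have s1 : dist p q = dist q p := dist_comm p q
  have s2 : dist q u = dist u q := dist_comm q u
  have n1 : 0 ≤ dist q w := dist_nonneg
  have n2 : 0 ≤ dist u w := dist_nonneg
  have n3 : 0 ≤ dist q p := dist_nonneg
  have huq : dist u q ≤ ε * dist q p + 1 := by linarith
  nlinarith [mul_nonneg hε0.le n1, mul_nonneg hε0.le n3, mul_nonneg hε0.le n2,
    mul_nonneg (mul_nonneg hε0.le hε0.le) n1, mul_nonneg (mul_nonneg hε0.le hε0.le) n2,
    mul_nonneg (mul_nonneg (mul_nonneg hε0.le hε0.le) hε0.le) n1]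
end

section
/- Let X be a metric space, let ε be a real number with 0 < ε < 1/4, and let u, p, q, s, w, f be points of X. Suppose that ε·dist(q,w) ≤ dist(q,p), that dist(p,q) ≤ ε²·dist(p,s), that dist(p,s) ≤ dist(p,u), and that dist(p,f) ≤ (1+ε)·dist(p,w) + 1. Then dist(u,f) ≤ dist(u,w) + 5ε·dist(u,p) + 1. -/
theorem stmt_8 {X : Type*} [MetricSpace X] (ε : ℝ) (hε0 : 0 < ε) (hε1 : ε < 1/4)
    (u p q s w f : X)
    (h1 : ε * dist q w ≤ dist q p)
    (h2 : dist p q ≤ ε ^ 2 * dist p s)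
    (h3 : dist p s ≤ dist p u)
    (h4 : dist p f ≤ (1 + ε) * dist p w + 1) :
    dist u f ≤ dist u w + 5 * ε * dist u p + 1 := by
  have t1 := dist_triangle u p f
  have t2 := dist_triangle u w p
  have t3 := dist_triangle p q w
  have e1 : dist w p = dist p w := dist_comm w p
  have e2 : dist q p = dist p q := dist_comm q p
  have e3 : dist u p = dist p u := dist_comm u p
  have hpu : 0 ≤ dist p u := dist_nonneg
  have hpw : 0 ≤ dist p w := dist_nonneg
  have hpq : 0 ≤ dist p q := dist_nonneg
  have key : dist p w ≤ ε * (1 + ε) * dist p u := by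
    have hqw : ε * dist q w ≤ ε ^ 2 * dist p u := by
      nlinarith
    nlinarith
  nlinarith [mul_nonneg hε0.le hpu]
end

section
/- Let X be a metric space, let ε be a real number with 0 < ε < 1/4, and let v, u, p, q, w, f be points of X. Suppose that dist(v,w) = dist(v,u) + dist(u,w), that dist(u,p) ≤ dist(u,v), that dist(u,p) = dist(u,q) + dist(q,p), that dist(u,p) ≤ (1+ε)·dist(q,p) + 1, and that dist(q,f) ≤ (1+ε)·dist(q,w) + 1. Then dist(v,f) ≤ (1+4ε)·dist(v,w) + 4. -/
theorem stmt_10 {X : Type*} [MetricSpace X] (ε : ℝ) (hε0 : 0 < ε) (hε1 : ε < 1/4)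
    (v u p q w f : X)
    (h1 : dist v w = dist v u + dist u w)
    (h2 : dist u p ≤ dist u v)
    (h3 : dist u p = dist u q + dist q p)
    (h4 : dist u p ≤ (1 + ε) * dist q p + 1)
    (h5 : dist q f ≤ (1 + ε) * dist q w + 1) :
    dist v f ≤ (1 + 4 * ε) * dist v w + 4 := by
  have t1 : dist v f ≤ dist v u + dist u q + dist q f := by
    calc dist v f ≤ dist v q + dist q f := dist_triangle v q f
    _ ≤ dist v u + dist u q + dist q f := by
        have := dist_triangle v u q; linarith
  have t2 : dist q w ≤ dist q u + dist u w := dist_triangle q u w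
  have e1 : dist u q ≤ ε * dist u v + 1 := by
    have hqp : 0 ≤ dist q p := dist_nonneg
    nlinarith [dist_nonneg (x := u) (y := q)]
  have hq : dist q u = dist u q := dist_comm q u
  have hvu : dist v u = dist u v := dist_comm v u
  have huw : 0 ≤ dist u w := dist_nonneg
  have huv : 0 ≤ dist u v := dist_nonneg
  nlinarith [sq_nonneg ε]
end
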